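/- arXiv:2506.18356 — 2 statements merged into one kernel-verified Lean document; each statement's English description precedes it below -/
import Mathlib

section
/- Let a ∈ ℝⁿ, let B be an n×n×n tensor, define r(x) = x − a − Bx² and R_x = I − Bx: − B:x, and let x* satisfy r(x*) = 0 with R_{x*} invertible. Fix a vector norm on ℝⁿ and the induced matrix norm, and let β ≥ 0 be such that ‖R_x − R_y‖ ≤ β‖x − y‖ for all x, y ∈ ℝⁿ. Let x̃_k ∈ ℝⁿ, let E_k be a matrix and e_k, ε_k vectors, and suppose: ‖R_{x̃_k}⁻¹E_k‖ ≤ ν for some 0 ≤ ν < 1 (with R_{x̃_k} invertible); β‖R_{x*}⁻¹‖·‖x̃_k − x*‖ ≤ μ for some 0 ≤ μ < 1; R_{x̃_k} + E_k is invertible and h̃_k := (R_{x̃_k} + E_k)⁻¹(r_k + e_k) with r_k = x̃_k − a − Bx̃_k²; x̃_{k+1} = x̃_k − h̃_k + ε_k; and ‖ε_k‖ ≤ u(‖x̃_k − x*‖ + ‖x*‖ + ‖h̃_k‖) for some u ≥ 0. Then ‖x̃_{k+1} − x*‖ ≤ G_k‖x̃_k − x*‖ + g_k, where G_k = ν/(1−ν)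 + μ/(2(1−μ)(1−ν)) + u and g_k = ‖R_{x*}⁻¹e_k‖/((1−ν)(1−μ)) + u(‖x*‖ + ‖h̃_k‖). -/
open Matrix

/-- `(tapp B x y) i = Σ_{j,k} B i j k * x j * y k`, the tensor–vector–vector product. -/
def tapp {n : ℕ} (B : Fin n → Fin n → Fin n → ℝ) (x y : Fin n → ℝ) : Fin n → ℝ :=
  fun i => ∑ j, ∑ k, B i j k * x j * y k

/-- The matrix `Bx:`, satisfying `(Bx:) h = B x h`; `(Bx:)_{ij} = Σ_k b_{ikj} x_k`. -/
def matL {n : ℕ} (B : Fin n → Fin n → Fin n → ℝ) (x : Fin n → ℝ) :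
    Matrix (Fin n) (Fin n) ℝ :=
  Matrix.of fun i j => ∑ k, B i k j * x k

/-- The matrix `B:x`, satisfying `(B:x) h = B h x`; `(B:x)_{ij} = Σ_k b_{ijk} x_k`. -/
def matR {n : ℕ} (B : Fin n → Fin n → Fin n → ℝ) (x : Fin n → ℝ) :
    Matrix (Fin n) (Fin n) ℝ :=
  Matrix.of fun i j => ∑ k, B i j k * x k

/-- `R_x = I − Bx: − B:x`, the negative Jacobian of `x ↦ a + Bx² − x`. -/
def Rmat {n : ℕ} (B : Fin n → Fin n → Fin n → ℝ) (x : Fin n → ℝ) :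
    Matrix (Fin n) (Fin n) ℝ :=
  1 - matL B x - matR B x

/-- The matrix norm induced by the (sup) norm on `Fin n → ℝ`: the operator norm of
the linear map `v ↦ A *ᵥ v`. -/
noncomputable def opNorm {n : ℕ} (A : Matrix (Fin n) (Fin n) ℝ) : ℝ :=
  ‖LinearMap.toContinuousLinearMap (Matrix.mulVecLin A)‖

lemma mulVec_norm_le {n : ℕ} (A : Matrix (Fin n) (Fin n) ℝ) (v : Fin n → ℝ) :
    ‖A *ᵥ v‖ ≤ opNorm A * ‖v‖ := by
  have := (LinearMap.toContinuousLinearMap (Matrix.mulVecLin A)).le_opNorm v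
  simpa [opNorm] using this

lemma matL_mulVec {n : ℕ} (B : Fin n → Fin n → Fin n → ℝ) (x h : Fin n → ℝ) :
    matL B x *ᵥ h = tapp B x h := by
  funext i
  simp only [matL, tapp, mulVec, dotProduct, Matrix.of_apply, Finset.sum_mul]
  rw [Finset.sum_comm]

lemma matR_mulVec {n : ℕ} (B : Fin n → Fin n → Fin n → ℝ) (x h : Fin n → ℝ) :
    matR B x *ᵥ h = tapp B h x := by
  funext i
  simp only [matR, tapp, mulVec, dotProduct, Matrix.of_apply, Finset.sum_mul]
  congr 1; funext j; congr 1; funext k; ring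

lemma tapp_sub_left {n : ℕ} (B : Fin n → Fin n → Fin n → ℝ) (x y z : Fin n → ℝ) :
    tapp B (x - y) z = tapp B x z - tapp B y z := by
  funext i
  simp [tapp, Pi.sub_apply, mul_sub, sub_mul, Finset.sum_sub_distrib]

lemma tapp_sub_right {n : ℕ} (B : Fin n → Fin n → Fin n → ℝ) (x y z : Fin n → ℝ) :
    tapp B x (y - z) = tapp B x y - tapp B x z := by
  funext i
  simp [tapp, Pi.sub_apply, mul_sub, sub_mul, Finset.sum_sub_distrib]


/-- One step of Newton's method in floating-point arithmetic
(variant of Tisseur's Theorem 2.2 proved in the paper): the new error satisfies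
`‖x̃_{k+1} − x*‖ ≤ G_k ‖x̃_k − x*‖ + g_k` with
`g_k` governed by `‖R_{x*}⁻¹ e_k‖` rather than `‖R_{x*}⁻¹‖·‖e_k‖`. -/
theorem newton_limiting_accuracy_step
    {n : ℕ} (a : Fin n → ℝ) (B : Fin n → Fin n → Fin n → ℝ)
    (xstar : Fin n → ℝ)
    (hroot : xstar - a - tapp B xstar xstar = 0)
    (hRstar : IsUnit (Rmat B xstar).det)
    (β : ℝ) (hβ0 : 0 ≤ β)
    (hβ : ∀ x y : Fin n → ℝ, opNorm (Rmat B x - Rmat B y) ≤ β * ‖x - y‖)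
    (xk : Fin n → ℝ) (Ek : Matrix (Fin n) (Fin n) ℝ) (ek εk : Fin n → ℝ)
    (ν : ℝ) (hν0 : 0 ≤ ν) (hν1 : ν < 1)
    (hRk : IsUnit (Rmat B xk).det)
    (hν : opNorm ((Rmat B xk)⁻¹ * Ek) ≤ ν)
    (μ : ℝ) (hμ0 : 0 ≤ μ) (hμ1 : μ < 1)
    (hμ : β * opNorm ((Rmat B xstar)⁻¹) * ‖xk - xstar‖ ≤ μ)
    (hREdet : IsUnit (Rmat B xk + Ek).det)
    (hk : Fin n → ℝ)
    (hhk : hk = (Rmat B xk + Ek)⁻¹ *ᵥ ((xk - a - tapp B xk xk) + ek))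
    (xk1 : Fin n → ℝ) (hxk1 : xk1 = xk - hk + εk)
    (u : ℝ) (hu0 : 0 ≤ u)
    (hεk : ‖εk‖ ≤ u * (‖xk - xstar‖ + ‖xstar‖ + ‖hk‖)) :
    ‖xk1 - xstar‖ ≤
      (ν / (1 - ν) + μ / (2 * (1 - μ) * (1 - ν)) + u) * ‖xk - xstar‖ +
      (‖(Rmat B xstar)⁻¹ *ᵥ ek‖ / ((1 - ν) * (1 - μ)) + u * (‖xstar‖ + ‖hk‖)) := by
  have hp : (0:ℝ) < 1 - ν := by linarith
  have hm : (0:ℝ) < 1 - μ := by linarith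
  have ha : a = xstar - tapp B xstar xstar := by
    funext i
    have := congrFun hroot i
    simp [Pi.sub_apply] at this ⊢
    linarith
  -- the residual identity r_k = R_k d + q
  have hRkd : Rmat B xk *ᵥ (xk - xstar)
      = (xk - xstar) - tapp B xk (xk - xstar) - tapp B (xk - xstar) xk := by
    simp [Rmat, Matrix.sub_mulVec, Matrix.one_mulVec, matL_mulVec, matR_mulVec]
  have hresid : xk - a - tapp B xk xk
      = Rmat B xk *ᵥ (xk - xstar) + tapp B (xk - xstar) (xk - xstar) := by
    rw [ha, hRkd]
    simp only [tapp_sub_left, tapp_sub_right]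
    abel
  -- (R_* - R_k) d = q + q
  have hq2 : (Rmat B xstar - Rmat B xk) *ᵥ (xk - xstar)
      = tapp B (xk - xstar) (xk - xstar) + tapp B (xk - xstar) (xk - xstar) := by
    have : (Rmat B xstar - Rmat B xk) *ᵥ (xk - xstar)
        = Rmat B xstar *ᵥ (xk - xstar) - Rmat B xk *ᵥ (xk - xstar) := by
      rw [Matrix.sub_mulVec]
    rw [this, hRkd]
    simp only [Rmat, Matrix.sub_mulVec, Matrix.one_mulVec, matL_mulVec, matR_mulVec,
      tapp_sub_left, tapp_sub_right]
    abel
  set d : Fin n → ℝ := xk - xstar with hd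
  set q : Fin n → ℝ := tapp B d d with hqdef
  set v : Fin n → ℝ := d - hk with hvdef
  -- (R_k + E_k) v = E_k d - q - e_k
  have hv : (Rmat B xk + Ek) *ᵥ v = Ek *ᵥ d - q - ek := by
    have h1 : (Rmat B xk + Ek) *ᵥ hk = (xk - a - tapp B xk xk) + ek := by
      rw [hhk, Matrix.mulVec_mulVec, Matrix.mul_nonsing_inv _ hREdet, Matrix.one_mulVec]
    rw [hvdef, Matrix.mulVec_sub, h1, hresid, Matrix.add_mulVec]
    abel
  -- v = F d - R_k⁻¹ q - R_k⁻¹ e_k - F v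
  have hv2 : v = ((Rmat B xk)⁻¹ * Ek) *ᵥ d - (Rmat B xk)⁻¹ *ᵥ q
      - (Rmat B xk)⁻¹ *ᵥ ek - ((Rmat B xk)⁻¹ * Ek) *ᵥ v := by
    have h1 : Rmat B xk *ᵥ v = Ek *ᵥ d - q - ek - Ek *ᵥ v := by
      have := hv
      rw [Matrix.add_mulVec] at this
      have h2 : Rmat B xk *ᵥ v = (Rmat B xk *ᵥ v + Ek *ᵥ v) - Ek *ᵥ v := by abel
      rw [h2, this]
    have h3 : (Rmat B xk)⁻¹ *ᵥ (Rmat B xk *ᵥ v) = v := by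
      rw [Matrix.mulVec_mulVec, Matrix.nonsing_inv_mul _ hRk, Matrix.one_mulVec]
    calc v = (Rmat B xk)⁻¹ *ᵥ (Rmat B xk *ᵥ v) := h3.symm
      _ = (Rmat B xk)⁻¹ *ᵥ (Ek *ᵥ d - q - ek - Ek *ᵥ v) := by rw [h1]
      _ = ((Rmat B xk)⁻¹ * Ek) *ᵥ d - (Rmat B xk)⁻¹ *ᵥ q
          - (Rmat B xk)⁻¹ *ᵥ ek - ((Rmat B xk)⁻¹ * Ek) *ᵥ v := by
        rw [Matrix.mulVec_sub, Matrix.mulVec_sub, Matrix.mulVec_sub,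
          Matrix.mulVec_mulVec, Matrix.mulVec_mulVec]
  -- shift lemma : ‖R_k⁻¹ z‖ ≤ ‖R_*⁻¹ z‖ / (1-μ)
  have hshift : ∀ z : Fin n → ℝ,
      ‖(Rmat B xk)⁻¹ *ᵥ z‖ ≤ ‖(Rmat B xstar)⁻¹ *ᵥ z‖ / (1 - μ) := by
    intro z
    set w : Fin n → ℝ := (Rmat B xk)⁻¹ *ᵥ z with hw
    have h1 : Rmat B xk *ᵥ w = z := by
      rw [hw, Matrix.mulVec_mulVec, Matrix.mul_nonsing_inv _ hRk, Matrix.one_mulVec]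
    have h2 : w = (Rmat B xstar)⁻¹ *ᵥ z
        - (Rmat B xstar)⁻¹ *ᵥ ((Rmat B xk - Rmat B xstar) *ᵥ w) := by
      have h3 : Rmat B xstar *ᵥ w = z - (Rmat B xk - Rmat B xstar) *ᵥ w := by
        rw [Matrix.sub_mulVec, h1]; abel
      have h4 : (Rmat B xstar)⁻¹ *ᵥ (Rmat B xstar *ᵥ w) = w := by
        rw [Matrix.mulVec_mulVec, Matrix.nonsing_inv_mul _ hRstar, Matrix.one_mulVec]
      calc w = (Rmat B xstar)⁻¹ *ᵥ (Rmat B xstar *ᵥ w) := h4.symm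
        _ = (Rmat B xstar)⁻¹ *ᵥ (z - (Rmat B xk - Rmat B xstar) *ᵥ w) := by rw [h3]
        _ = (Rmat B xstar)⁻¹ *ᵥ z
            - (Rmat B xstar)⁻¹ *ᵥ ((Rmat B xk - Rmat B xstar) *ᵥ w) := by
          rw [Matrix.mulVec_sub]
    have h5 : ‖(Rmat B xstar)⁻¹ *ᵥ ((Rmat B xk - Rmat B xstar) *ᵥ w)‖ ≤ μ * ‖w‖ := by
      calc ‖(Rmat B xstar)⁻¹ *ᵥ ((Rmat B xk - Rmat B xstar) *ᵥ w)‖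
          ≤ opNorm (Rmat B xstar)⁻¹ * ‖(Rmat B xk - Rmat B xstar) *ᵥ w‖ :=
            mulVec_norm_le _ _
        _ ≤ opNorm (Rmat B xstar)⁻¹ * (opNorm (Rmat B xk - Rmat B xstar) * ‖w‖) := by
            apply mul_le_mul_of_nonneg_left (mulVec_norm_le _ _) (norm_nonneg _)
        _ ≤ opNorm (Rmat B xstar)⁻¹ * ((β * ‖xk - xstar‖) * ‖w‖) := by
            apply mul_le_mul_of_nonneg_left _ (norm_nonneg _)
            exact mul_le_mul_of_nonneg_right (hβ xk xstar) (norm_nonneg _)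
        _ = (β * opNorm (Rmat B xstar)⁻¹ * ‖xk - xstar‖) * ‖w‖ := by ring
        _ ≤ μ * ‖w‖ := mul_le_mul_of_nonneg_right hμ (norm_nonneg _)
    have h6 : ‖w‖ ≤ ‖(Rmat B xstar)⁻¹ *ᵥ z‖ + μ * ‖w‖ := by
      calc ‖w‖ = ‖(Rmat B xstar)⁻¹ *ᵥ z
          - (Rmat B xstar)⁻¹ *ᵥ ((Rmat B xk - Rmat B xstar) *ᵥ w)‖ := by rw [← h2]
        _ ≤ ‖(Rmat B xstar)⁻¹ *ᵥ z‖
            + ‖(Rmat B xstar)⁻¹ *ᵥ ((Rmat B xk - Rmat B xstar) *ᵥ w)‖ := norm_sub_le _ _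
        _ ≤ ‖(Rmat B xstar)⁻¹ *ᵥ z‖ + μ * ‖w‖ := by linarith
    rw [le_div_iff₀ hm]
    nlinarith [norm_nonneg w]
  -- bound on ‖R_*⁻¹ q‖
  have hqb : ‖(Rmat B xstar)⁻¹ *ᵥ q‖ ≤ μ * ‖d‖ / 2 := by
    have h1 : (Rmat B xstar)⁻¹ *ᵥ ((Rmat B xstar - Rmat B xk) *ᵥ d)
        = (Rmat B xstar)⁻¹ *ᵥ q + (Rmat B xstar)⁻¹ *ᵥ q := by
      rw [hq2, Matrix.mulVec_add]
    have h2 : ‖(Rmat B xstar)⁻¹ *ᵥ ((Rmat B xstar - Rmat B xk) *ᵥ d)‖ ≤ μ * ‖d‖ := by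
      calc ‖(Rmat B xstar)⁻¹ *ᵥ ((Rmat B xstar - Rmat B xk) *ᵥ d)‖
          ≤ opNorm (Rmat B xstar)⁻¹ * ‖(Rmat B xstar - Rmat B xk) *ᵥ d‖ :=
            mulVec_norm_le _ _
        _ ≤ opNorm (Rmat B xstar)⁻¹ * (opNorm (Rmat B xstar - Rmat B xk) * ‖d‖) := by
            apply mul_le_mul_of_nonneg_left (mulVec_norm_le _ _) (norm_nonneg _)
        _ ≤ opNorm (Rmat B xstar)⁻¹ * ((β * ‖xstar - xk‖) * ‖d‖) := by
            apply mul_le_mul_of_nonneg_left _ (norm_nonneg _)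
            exact mul_le_mul_of_nonneg_right (hβ xstar xk) (norm_nonneg _)
        _ = (β * opNorm (Rmat B xstar)⁻¹ * ‖xk - xstar‖) * ‖d‖ := by
            rw [norm_sub_rev]; ring
        _ ≤ μ * ‖d‖ := mul_le_mul_of_nonneg_right hμ (norm_nonneg _)
    have h3 : ‖(Rmat B xstar)⁻¹ *ᵥ q + (Rmat B xstar)⁻¹ *ᵥ q‖
        = 2 * ‖(Rmat B xstar)⁻¹ *ᵥ q‖ := by
      rw [← two_smul ℝ ((Rmat B xstar)⁻¹ *ᵥ q), norm_smul]
      simp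
    rw [h1, h3] at h2
    linarith
  -- main bound on ‖v‖
  have hvb : ‖v‖ ≤ ν * ‖d‖ + (μ * ‖d‖ / 2) / (1 - μ)
      + ‖(Rmat B xstar)⁻¹ *ᵥ ek‖ / (1 - μ) + ν * ‖v‖ := by
    have t1 : ‖((Rmat B xk)⁻¹ * Ek) *ᵥ d‖ ≤ ν * ‖d‖ :=
      le_trans (mulVec_norm_le _ _) (mul_le_mul_of_nonneg_right hν (norm_nonneg _))
    have t4 : ‖((Rmat B xk)⁻¹ * Ek) *ᵥ v‖ ≤ ν * ‖v‖ :=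
      le_trans (mulVec_norm_le _ _) (mul_le_mul_of_nonneg_right hν (norm_nonneg _))
    have t2 : ‖(Rmat B xk)⁻¹ *ᵥ q‖ ≤ (μ * ‖d‖ / 2) / (1 - μ) := by
      refine le_trans (hshift q) ?_
      gcongr
    have t3 : ‖(Rmat B xk)⁻¹ *ᵥ ek‖ ≤ ‖(Rmat B xstar)⁻¹ *ᵥ ek‖ / (1 - μ) := hshift ek
    have tri : ‖v‖ ≤ ‖((Rmat B xk)⁻¹ * Ek) *ᵥ d‖ + ‖(Rmat B xk)⁻¹ *ᵥ q‖
        + ‖(Rmat B xk)⁻¹ *ᵥ ek‖ + ‖((Rmat B xk)⁻¹ * Ek) *ᵥ v‖ := by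
      conv_lhs => rw [hv2]
      calc ‖((Rmat B xk)⁻¹ * Ek) *ᵥ d - (Rmat B xk)⁻¹ *ᵥ q - (Rmat B xk)⁻¹ *ᵥ ek
            - ((Rmat B xk)⁻¹ * Ek) *ᵥ v‖
          ≤ ‖((Rmat B xk)⁻¹ * Ek) *ᵥ d - (Rmat B xk)⁻¹ *ᵥ q - (Rmat B xk)⁻¹ *ᵥ ek‖
            + ‖((Rmat B xk)⁻¹ * Ek) *ᵥ v‖ := norm_sub_le _ _
        _ ≤ ‖((Rmat B xk)⁻¹ * Ek) *ᵥ d - (Rmat B xk)⁻¹ *ᵥ q‖ + ‖(Rmat B xk)⁻¹ *ᵥ ek‖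
            + ‖((Rmat B xk)⁻¹ * Ek) *ᵥ v‖ := by
            have := norm_sub_le (((Rmat B xk)⁻¹ * Ek) *ᵥ d - (Rmat B xk)⁻¹ *ᵥ q)
              ((Rmat B xk)⁻¹ *ᵥ ek)
            linarith
        _ ≤ ‖((Rmat B xk)⁻¹ * Ek) *ᵥ d‖ + ‖(Rmat B xk)⁻¹ *ᵥ q‖ + ‖(Rmat B xk)⁻¹ *ᵥ ek‖
            + ‖((Rmat B xk)⁻¹ * Ek) *ᵥ v‖ := by
            have := norm_sub_le (((Rmat B xk)⁻¹ * Ek) *ᵥ d) ((Rmat B xk)⁻¹ *ᵥ q)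
            linarith
    linarith
  -- conclude
  have hx : xk1 - xstar = v + εk := by rw [hxk1, hvdef, hd]; abel
  have hfin : ‖xk1 - xstar‖ ≤ ‖v‖ + u * (‖d‖ + ‖xstar‖ + ‖hk‖) := by
    rw [hx]
    calc ‖v + εk‖ ≤ ‖v‖ + ‖εk‖ := norm_add_le _ _
      _ ≤ ‖v‖ + u * (‖d‖ + ‖xstar‖ + ‖hk‖) := by rw [hd]; linarith
  -- final arithmetic
  set D := ‖d‖ with hD
  set S := ‖(Rmat B xstar)⁻¹ *ᵥ ek‖ with hS
  have hD0 : 0 ≤ D := norm_nonneg _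
  have hS0 : 0 ≤ S := norm_nonneg _
  have hV0 : 0 ≤ ‖v‖ := norm_nonneg _
  have key : ‖v‖ ≤ (ν / (1 - ν) + μ / (2 * (1 - μ) * (1 - ν))) * D
      + S / ((1 - ν) * (1 - μ)) := by
    have e1 : (μ * D / 2) / (1 - μ) * (1 - μ) = μ * D / 2 :=
      div_mul_cancel₀ _ (ne_of_gt hm)
    have e2 : S / (1 - μ) * (1 - μ) = S := div_mul_cancel₀ _ (ne_of_gt hm)
    have cleared : ‖v‖ * ((1 - ν) * (1 - μ) * 2) ≤ (ν * (1 - μ) * 2 + μ) * D + 2 * S := by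
      nlinarith [hvb, hm, hp]
    have eq : (ν / (1 - ν) + μ / (2 * (1 - μ) * (1 - ν))) * D + S / ((1 - ν) * (1 - μ))
        = ((ν * (1 - μ) * 2 + μ) * D + 2 * S) / ((1 - ν) * (1 - μ) * 2) := by
      field_simp
    rw [eq, le_div_iff₀ (by positivity)]
    linarith
  calc ‖xk1 - xstar‖ ≤ ‖v‖ + u * (D + ‖xstar‖ + ‖hk‖) := hfin
    _ ≤ (ν / (1 - ν) + μ / (2 * (1 - μ) * (1 - ν))) * D + S / ((1 - ν) * (1 - μ))
        + u * (D + ‖xstar‖ + ‖hk‖) := by linarith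
    _ = (ν / (1 - ν) + μ / (2 * (1 - μ) * (1 - ν)) + u) * D
        + (S / ((1 - ν) * (1 - μ)) + u * (‖xstar‖ + ‖hk‖)) := by ring
end

section
/- Let a ∈ ℝⁿ with a ≥ 0 entrywise and let B be an entrywise nonnegative n×n×n tensor, and suppose the equation x = a + Bx² has at least one nonnegative solution x̄. Define x_0 = 0 and x_{k+1} = a + Bx_k² for k ≥ 0. Then the sequence is monotonically increasing with x_k ≤ x̄ entrywise for all k, it converges to a limit m, m satisfies m = a + Bm², and m ≤ x entrywise for every nonnegative solution x of the equation (i.e., m is the minimal nonnegative solution). -/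
open Matrix

lemma tapp_mono {n : ℕ} (B : Fin n → Fin n → Fin n → ℝ)
    (hB : ∀ i j k, 0 ≤ B i j k) {u v : Fin n → ℝ}
    (hu0 : ∀ i, 0 ≤ u i) (huv : ∀ i, u i ≤ v i) :
    ∀ i, tapp B u u i ≤ tapp B v v i := by
  intro i
  unfold tapp
  refine Finset.sum_le_sum fun j _ => Finset.sum_le_sum fun k _ => ?_
  have h1 : u j * u k ≤ v j * v k :=
    mul_le_mul (huv j) (huv k) (hu0 k) (le_trans (hu0 j) (huv j))
  calc B i j k * u j * u k = B i j k * (u j * u k) := by ring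
    _ ≤ B i j k * (v j * v k) := mul_le_mul_of_nonneg_left h1 (hB i j k)
    _ = B i j k * v j * v k := by ring

lemma tapp_nonneg {n : ℕ} (B : Fin n → Fin n → Fin n → ℝ)
    (hB : ∀ i j k, 0 ≤ B i j k) {u : Fin n → ℝ} (hu0 : ∀ i, 0 ≤ u i) :
    ∀ i, 0 ≤ tapp B u u i := by
  intro i
  exact Finset.sum_nonneg fun j _ => Finset.sum_nonneg fun k _ =>
    mul_nonneg (mul_nonneg (hB i j k) (hu0 j)) (hu0 k)

lemma tapp_continuous {n : ℕ} (B : Fin n → Fin n → Fin n → ℝ) (a : Fin n → ℝ) :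
    Continuous fun v : Fin n → ℝ => a + tapp B v v := by
  unfold tapp
  refine Continuous.add continuous_const ?_
  refine continuous_pi fun i => ?_
  refine continuous_finset_sum _ fun j _ => continuous_finset_sum _ fun k _ => ?_
  exact ((continuous_const.mul (continuous_apply j)).mul (continuous_apply k))

/-- The fixed-point iteration `x_0 = 0`, `x_{k+1} = a + B x_k²` is monotonically
increasing, bounded above by any nonnegative solution, and converges to the minimal
nonnegative solution of `x = a + Bx²` (part of Theorem `thm.21` in the paper). -/
theorem fixed_point_iteration_minimal_solution
    {n : ℕ} (a : Fin n → ℝ) (B : Fin n → Fin n → Fin n → ℝ)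
    (ha : ∀ i, 0 ≤ a i) (hB : ∀ i j k, 0 ≤ B i j k)
    (xbar : Fin n → ℝ) (hxbar0 : ∀ i, 0 ≤ xbar i)
    (hxbar : xbar = a + tapp B xbar xbar)
    (x : ℕ → (Fin n → ℝ))
    (hx0 : x 0 = 0)
    (hxs : ∀ k, x (k + 1) = a + tapp B (x k) (x k)) :
    (∀ k i, x k i ≤ x (k + 1) i) ∧
    (∀ k i, x k i ≤ xbar i) ∧
    ∃ m : Fin n → ℝ,
      Filter.Tendsto x Filter.atTop (nhds m) ∧
      (∀ i, 0 ≤ m i) ∧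
      m = a + tapp B m m ∧
      ∀ s : Fin n → ℝ, (∀ i, 0 ≤ s i) → s = a + tapp B s s → ∀ i, m i ≤ s i := by

  -- nonnegativity of iterates
  have hpos : ∀ k i, 0 ≤ x k i := by
    intro k
    induction k with
    | zero => intro i; rw [hx0]; simp
    | succ k ih =>
      intro i
      rw [hxs k]
      exact add_nonneg (ha i) (tapp_nonneg B hB ih i)
  -- monotonicity
  have hmono : ∀ k i, x k i ≤ x (k + 1) i := by
    intro k
    induction k with
    | zero => intro i; rw [hx0]; exact hpos 1 i
    | succ k ih =>
      intro i
      rw [hxs k, hxs (k+1)]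
      exact add_le_add le_rfl (tapp_mono B hB (hpos k) ih i)
  -- bounded above by any nonnegative solution s
  have hbound : ∀ s : Fin n → ℝ, (∀ i, 0 ≤ s i) → s = a + tapp B s s →
      ∀ k i, x k i ≤ s i := by
    intro s hs0 hs k
    induction k with
    | zero => intro i; rw [hx0]; exact hs0 i
    | succ k ih =>
      intro i
      rw [hxs k, hs]
      exact add_le_add le_rfl (tapp_mono B hB (hpos k) ih i)
  refine ⟨hmono, hbound xbar hxbar0 hxbar, ?_⟩
  -- define the limit as the pointwise supremum
  set m : Fin n → ℝ := fun i => ⨆ k, x k i with hm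
  have hbdd : ∀ i, BddAbove (Set.range fun k => x k i) := by
    intro i
    exact ⟨xbar i, by rintro _ ⟨k, rfl⟩; exact hbound xbar hxbar0 hxbar k i⟩
  have hmonoi : ∀ i, Monotone fun k => x k i := by
    intro i
    exact monotone_nat_of_le_succ fun k => hmono k i
  have hti : ∀ i, Filter.Tendsto (fun k => x k i) Filter.atTop (nhds (m i)) := by
    intro i
    exact tendsto_atTop_ciSup (hmonoi i) (hbdd i)
  have ht : Filter.Tendsto x Filter.atTop (nhds m) := tendsto_pi_nhds.2 hti
  have hm0 : ∀ i, 0 ≤ m i := fun i => le_trans (hpos 0 i) (le_ciSup (hbdd i) 0)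
  have hmfix : m = a + tapp B m m := by
    have h1 : Filter.Tendsto (fun k => x (k + 1)) Filter.atTop (nhds m) :=
      ht.comp (Filter.tendsto_add_atTop_nat 1)
    have h2 : Filter.Tendsto (fun k => a + tapp B (x k) (x k)) Filter.atTop
        (nhds (a + tapp B m m)) :=
      ((tapp_continuous B a).continuousAt).tendsto.comp ht
    have h3 : (fun k => x (k + 1)) = fun k => a + tapp B (x k) (x k) := by
      funext k; exact hxs k
    rw [h3] at h1
    exact tendsto_nhds_unique h1 h2
  refine ⟨m, ht, hm0, hmfix, ?_⟩
  intro s hs0 hs i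
  exact ciSup_le fun k => hbound s hs0 hs k i
end
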